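/- If for each n ∈ Λ the operator T_n satisfies ‖T_n f_n‖_{L^p(μ_n)}^p ≤ c̃^p ‖f_n‖_{L^p(μ_n)}^p, and for f on the disjoint union X with f_n = f|_{X_n} one has the pointwise identity T f(x) = max{T_n f_n(x), ‖f‖_1/μ(X)} for x ∈ X_n, then ‖Tf‖_p^p ≤ ∑_n ‖T_n f_n‖_p^p + ‖f‖_1^p μ(X)^{1−p} ≤ (c̃^p + 1)‖f‖_p^p for p ∈ [1,∞). -/
import Mathlib


open MeasureTheory
open scoped ENNReal

/-- The measure on the countable disjoint union of the measure spaces `(X_n, μ_n)`. -/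
noncomputable def unionMeasure (X : ℕ → Type*) [∀ n, MeasurableSpace (X n)]
    (μ : ∀ n, Measure (X n)) : Measure (Σ n, X n) :=
  Measure.sum (fun n => (μ n).map (Sigma.mk n))

lemma measurable_sigmaMk' {X : ℕ → Type*} [∀ n, MeasurableSpace (X n)] (n : ℕ) :
    Measurable (Sigma.mk n : X n → Σ n, X n) :=
  measurable_iff_le_map.2 (iInf_le _ n)

/-- If each `T_n` satisfies `‖T_n f_n‖_p^p ≤ c̃^p ‖f_n‖_p^p` and the operator `T` on the
disjoint union satisfies `T f(x) = max{T_n f_n(x), ‖f‖₁/μ(X)}` for `x ∈ X_n`, then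
`‖Tf‖_p^p ≤ ∑_n ‖T_n f_n‖_p^p + ‖f‖₁^p μ(X)^(1-p) ≤ (c̃^p + 1) ‖f‖_p^p`. -/
theorem stmt16 (X : ℕ → Type*) [∀ n, MeasurableSpace (X n)] (μ : ∀ n, Measure (X n))
    (p : ℝ) (hp : 1 ≤ p) (ctil : ℝ≥0∞)
    (hν0 : unionMeasure X μ Set.univ ≠ 0) (hνfin : unionMeasure X μ Set.univ ≠ ∞)
    (f : (Σ n, X n) → ℝ≥0∞) (hf : Measurable f)
    (Tn : ∀ n, X n → ℝ≥0∞)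
    (hTn : ∀ n, ∫⁻ x, (Tn n x) ^ p ∂(μ n) ≤ ctil ^ p * ∫⁻ x, (f ⟨n, x⟩) ^ p ∂(μ n))
    (g : (Σ n, X n) → ℝ≥0∞) (hg : Measurable g)
    (hgT : ∀ n (x : X n),
      g ⟨n, x⟩ = max (Tn n x)
        ((∫⁻ y, f y ∂(unionMeasure X μ)) / unionMeasure X μ Set.univ)) :
    (∫⁻ x, g x ^ p ∂(unionMeasure X μ))
        ≤ (∑' n, ∫⁻ x, (Tn n x) ^ p ∂(μ n))
          + (∫⁻ y, f y ∂(unionMeasure X μ)) ^ p * (unionMeasure X μ Set.univ) ^ (1 - p) ∧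
    (∑' n, ∫⁻ x, (Tn n x) ^ p ∂(μ n))
        + (∫⁻ y, f y ∂(unionMeasure X μ)) ^ p * (unionMeasure X μ Set.univ) ^ (1 - p)
      ≤ (ctil ^ p + 1) * ∫⁻ x, f x ^ p ∂(unionMeasure X μ) := by
  set ν := unionMeasure X μ with hνdef
  set I := ∫⁻ y, f y ∂ν with hIdef
  set M := ν Set.univ with hMdef
  set c := I / M with hcdef
  have hp0 : (0:ℝ) < p := lt_of_lt_of_le one_pos hp
  -- decomposition of integrals over the union
  have key : ∀ (h : (Σ n, X n) → ℝ≥0∞), Measurable h →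
      ∫⁻ x, h x ∂ν = ∑' n, ∫⁻ x, h ⟨n, x⟩ ∂(μ n) := by
    intro h hh
    rw [hνdef, unionMeasure, lintegral_sum_measure]
    exact tsum_congr fun n => lintegral_map hh (measurable_sigmaMk' n)
  have hMsum : M = ∑' n, μ n Set.univ := by
    rw [hMdef, hνdef, unionMeasure, Measure.sum_apply _ MeasurableSet.univ]
    exact tsum_congr fun n => by
      rw [Measure.map_apply (measurable_sigmaMk' n) MeasurableSet.univ, Set.preimage_univ]
  -- `c^p * M = I^p * M^(1-p)`
  have hcM : c ^ p * M = I ^ p * M ^ (1 - p) := by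
    rw [hcdef, ENNReal.div_rpow_of_nonneg _ _ hp0.le,
      ENNReal.rpow_sub _ _ hν0 hνfin, ENNReal.rpow_one,
      div_eq_mul_inv, div_eq_mul_inv, mul_right_comm, mul_assoc]
  have hA : ∫⁻ x, f x ^ p ∂ν = ∑' n, ∫⁻ x, (f ⟨n, x⟩) ^ p ∂(μ n) :=
    key _ (hf.pow measurable_const)
  constructor
  · -- first inequality
    rw [key _ (hg.pow measurable_const), ← hcM]
    have step : ∀ n, ∫⁻ x, (g ⟨n, x⟩) ^ p ∂(μ n)
        ≤ (∫⁻ x, (Tn n x) ^ p ∂(μ n)) + c ^ p * μ n Set.univ := by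
      intro n
      calc ∫⁻ x, (g ⟨n, x⟩) ^ p ∂(μ n)
          ≤ ∫⁻ x, ((Tn n x) ^ p + c ^ p) ∂(μ n) := by
            refine lintegral_mono fun x => ?_
            rw [hgT n x]
            rcases max_cases (Tn n x)
              ((∫⁻ y, f y ∂unionMeasure X μ) / unionMeasure X μ Set.univ) with
              ⟨he, _⟩ | ⟨he, _⟩ <;> rw [he]
            · exact le_add_right le_rfl
            · exact le_add_left le_rfl
        _ = (∫⁻ x, (Tn n x) ^ p ∂(μ n)) + c ^ p * μ n Set.univ := by
            rw [lintegral_add_right _ measurable_const, lintegral_const]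
    calc ∑' n, ∫⁻ x, (g ⟨n, x⟩) ^ p ∂(μ n)
        ≤ ∑' n, ((∫⁻ x, (Tn n x) ^ p ∂(μ n)) + c ^ p * μ n Set.univ) :=
          ENNReal.tsum_le_tsum step
      _ = (∑' n, ∫⁻ x, (Tn n x) ^ p ∂(μ n)) + c ^ p * M := by
          rw [ENNReal.tsum_add, ENNReal.tsum_mul_left, hMsum]
  · -- second inequality
    have part1 : (∑' n, ∫⁻ x, (Tn n x) ^ p ∂(μ n)) ≤ ctil ^ p * ∫⁻ x, f x ^ p ∂ν := by
      rw [hA, ← ENNReal.tsum_mul_left]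
      exact ENNReal.tsum_le_tsum hTn
    have part2 : I ^ p * M ^ (1 - p) ≤ ∫⁻ x, f x ^ p ∂ν := by
      rcases eq_or_lt_of_le hp with heq | hlt
      · simp only [← heq, ENNReal.rpow_one, sub_self, ENNReal.rpow_zero, mul_one]
        exact le_rfl
      · have hpq := Real.HolderConjugate.conjExponent hlt
        set q := Real.conjExponent p with hq
        have hq0 : q ≠ 0 := ne_of_gt hpq.symm.pos
        have holder := ENNReal.lintegral_mul_le_Lp_mul_Lq ν hpq hf.aemeasurable
          (aemeasurable_const (b := (1 : ℝ≥0∞)))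
        simp only [Pi.mul_apply, mul_one, ENNReal.one_rpow, lintegral_const, one_mul] at holder
        -- holder : I ≤ (∫⁻ f^p)^(1/p) * M^(1/q)
        have hIp : I ^ p ≤ (∫⁻ x, f x ^ p ∂ν) * M ^ (p - 1) := by
          have h1 : p * (1 / q) = p - 1 := by
            have h2 : 1 / q = 1 - 1 / p := by
              have := hpq.inv_add_inv_eq_one
              simp only [one_div]
              linarith
            rw [h2, mul_sub, mul_one, mul_one_div, div_self hp0.ne']
          calc I ^ p ≤ ((∫⁻ x, f x ^ p ∂ν) ^ (1 / p) * M ^ (1 / q)) ^ p :=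
                ENNReal.rpow_le_rpow holder hp0.le
            _ = (∫⁻ x, f x ^ p ∂ν) * M ^ (p - 1) := by
                rw [ENNReal.mul_rpow_of_nonneg _ _ hp0.le, ← ENNReal.rpow_mul,
                  ← ENNReal.rpow_mul, one_div, inv_mul_cancel₀ hp0.ne', ENNReal.rpow_one,
                  mul_comm (1 / q) p, h1]
        calc I ^ p * M ^ (1 - p)
            ≤ (∫⁻ x, f x ^ p ∂ν) * M ^ (p - 1) * M ^ (1 - p) :=
              mul_le_mul_left hIp _
          _ = ∫⁻ x, f x ^ p ∂ν := by
              rw [mul_assoc, ← ENNReal.rpow_add _ _ hν0 hνfin]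
              norm_num
    calc (∑' n, ∫⁻ x, (Tn n x) ^ p ∂(μ n)) + I ^ p * M ^ (1 - p)
        ≤ ctil ^ p * (∫⁻ x, f x ^ p ∂ν) + 1 * (∫⁻ x, f x ^ p ∂ν) := by
          refine add_le_add part1 ?_
          rw [one_mul]; exact part2
      _ = (ctil ^ p + 1) * ∫⁻ x, f x ^ p ∂ν := (add_mul _ _ _).symm
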